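/- Let U be a Banach space with a 1-unconditional normalized basis (u_s), X a Banach space, and (I_s)_{s=1}^∞ mutually annihilating bounded projections on X with sup_s ‖I_s‖ = A < ∞. Suppose there is a constant C such that for every x_1 ∈ X_1, ..., x_N ∈ X_N (where X_s = I_s(X)) one has ‖∑_{s=1}^N Q x_s‖ ≤ C max_{1≤s≤N} ‖x_s‖, where Q : X → X/X_0 is the quotient map and X_0 = ∩_s ker(I_s). Then the map x + X_0 ↦ (I_s x)_{s=1}^∞ is an A·C-isomorphism from Z/X_0 onto a subspace of the c_0-sum (⊕_{s=1}^∞ X_s)_{c_0}, where Z = closure of the span of ∪_{s≥0} X_s. -/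

import Mathlib

open Filter

/-- under the quotient condition, `x + X₀ ↦ (I_s x)` is an
`A·C`-isomorphism of `Z/X₀` onto a subspace of `(⊕_s X_s)_{c₀}`; this is
expressed by the membership of `(I_s x)` in the `c₀`-sum together with the
two-sided estimate between the quotient norm and the sup norm. -/
theorem stmt_6
    {X : Type*} [NormedAddCommGroup X] [NormedSpace ℂ X]
    (I : ℕ → X →L[ℂ] X) (A C : ℝ)
    (hA : ∀ s, ‖I s‖ ≤ A)
    (hproj : ∀ s, (I s).comp (I s) = I s)
    (hann : ∀ s t, s ≠ t → (I s).comp (I t) = 0)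
    (X₀ : Set X) (hX₀ : X₀ = {z : X | ∀ s : ℕ, I s z = 0})
    (hC : ∀ (N : ℕ) (x : Fin N → X), (∀ s : Fin N, I (s : ℕ) (x s) = x s) →
      ∀ M : ℝ, 0 ≤ M → (∀ s, ‖x s‖ ≤ M) →
        Metric.infDist (∑ s, x s) X₀ ≤ C * M)
    (Z : Set X)
    (hZ : Z = closure
      (Submodule.span ℂ (X₀ ∪ ⋃ s : ℕ, {z : X | I s z = z}) : Set X)) :
    ∀ x ∈ Z,
      Tendsto (fun s => ‖I s x‖) atTop (nhds 0) ∧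
      (⨆ s, ‖I s x‖) ≤ A * Metric.infDist x X₀ ∧
      Metric.infDist x X₀ ≤ C * ⨆ s, ‖I s x‖ := by
  have hA0 : 0 ≤ A := le_trans (norm_nonneg _) (hA 0)
  have h0mem : (0 : X) ∈ X₀ := by rw [hX₀]; intro s; simp
  have hne : X₀.Nonempty := ⟨0, h0mem⟩
  have hbd : ∀ x : X, ∀ s, ‖I s x‖ ≤ A * ‖x‖ := by
    intro x s
    exact le_trans ((I s).le_opNorm x) (mul_le_mul_of_nonneg_right (hA s) (norm_nonneg x))
  have hbdd : ∀ x : X, BddAbove (Set.range fun s => ‖I s x‖) := by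
    intro x
    exact ⟨A * ‖x‖, by rintro _ ⟨s, rfl⟩; exact hbd x s⟩
  have hsub : ∀ (x y : X) (s : ℕ), y ∈ X₀ → I s x = I s (x - y) := by
    intro x y s hy
    rw [hX₀] at hy
    simp [map_sub, hy s]
  -- lower bound on infDist : part 2
  have part2 : ∀ x : X, (⨆ s, ‖I s x‖) ≤ A * Metric.infDist x X₀ := by
    intro x
    apply ciSup_le
    intro s
    have key : ∀ y ∈ X₀, ‖I s x‖ ≤ A * dist x y := by
      intro y hy
      rw [hsub x y s hy, dist_eq_norm]
      exact hbd _ s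
    rcases eq_or_lt_of_le hA0 with hA' | hA'
    · have := key 0 h0mem
      have h2 : (0:ℝ) ≤ A * Metric.infDist x X₀ :=
        mul_nonneg hA0 Metric.infDist_nonneg
      rw [← hA'] at this
      simpa using le_trans (by simpa using this) h2
    · rw [← div_le_iff₀' hA']
      by_contra h
      push_neg at h
      obtain ⟨y, hy, hlt⟩ := (Metric.infDist_lt_iff hne).1 h
      exact absurd (key y hy) (by rw [← div_le_iff₀' hA']; exact not_le.2 hlt)
  -- finite support for elements of the span
  have hsupp : ∀ x ∈ Submodule.span ℂ (X₀ ∪ ⋃ s : ℕ, {z : X | I s z = z}),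
      ∃ F : Finset ℕ, ∀ s ∉ F, I s x = 0 := by
    intro x hx
    induction hx using Submodule.span_induction with
    | mem x hx =>
      rcases hx with hx | hx
      · rw [hX₀] at hx
        exact ⟨∅, fun s _ => hx s⟩
      · rcases Set.mem_iUnion.1 hx with ⟨t, ht⟩
        refine ⟨{t}, fun s hs => ?_⟩
        have hst : s ≠ t := by simpa using hs
        have := DFunLike.congr_fun (hann s t hst) x
        simp only [ContinuousLinearMap.comp_apply, ContinuousLinearMap.zero_apply] at this
        have hxt : I t x = x := ht
        rw [← hxt]
        exact this
    | zero => exact ⟨∅, by simp⟩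
    | add x y _ _ hx hy =>
      obtain ⟨F, hF⟩ := hx
      obtain ⟨G, hG⟩ := hy
      refine ⟨F ∪ G, fun s hs => ?_⟩
      rw [map_add, hF s (fun h => hs (Finset.mem_union_left _ h)),
        hG s (fun h => hs (Finset.mem_union_right _ h)), add_zero]
    | smul a x _ hx =>
      obtain ⟨F, hF⟩ := hx
      exact ⟨F, fun s hs => by rw [map_smul, hF s hs, smul_zero]⟩
  -- infDist is invariant under translation by elements of X₀
  have hX₀add : ∀ y ∈ X₀, ∀ c ∈ X₀, y + c ∈ X₀ := by
    intro y hy c hc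
    rw [hX₀] at *
    intro s; simp [map_add, hy s, hc s]
  have hX₀neg : ∀ c ∈ X₀, -c ∈ X₀ := by
    intro c hc
    rw [hX₀] at *
    intro s; simp [hc s]
  have htrans_le : ∀ (u c : X), c ∈ X₀ →
      Metric.infDist (u + c) X₀ ≤ Metric.infDist u X₀ := by
    intro u c hc
    by_contra h
    push_neg at h
    obtain ⟨y, hy, hlt⟩ := (Metric.infDist_lt_iff hne).1 h
    have : Metric.infDist (u + c) X₀ ≤ dist (u + c) (y + c) :=
      Metric.infDist_le_dist_of_mem (hX₀add y hy c hc)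
    rw [dist_add_right] at this
    exact absurd hlt (not_lt.2 this)
  have htrans : ∀ (u c : X), c ∈ X₀ →
      Metric.infDist (u + c) X₀ = Metric.infDist u X₀ := by
    intro u c hc
    refine le_antisymm (htrans_le u c hc) ?_
    have := htrans_le (u + c) (-c) (hX₀neg c hc)
    simpa using this
  -- finite case of part 3
  have hfin : ∀ x : X, (∃ F : Finset ℕ, ∀ s ∉ F, I s x = 0) →
      Metric.infDist x X₀ ≤ C * ⨆ s, ‖I s x‖ := by
    rintro x ⟨F, hF⟩
    set N := F.sup id + 1 with hN
    have hNlt : ∀ s ∈ F, s < N := fun s hs =>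
      Nat.lt_succ_of_le (Finset.le_sup (f := id) hs)
    set M := ⨆ s, ‖I s x‖ with hMdef
    have hle : ∀ s : ℕ, ‖I s x‖ ≤ M := fun s => le_ciSup (hbdd x) s
    have hM0 : 0 ≤ M := le_trans (norm_nonneg _) (hle 0)
    have hsum : Metric.infDist (∑ s : Fin N, I (s : ℕ) x) X₀ ≤ C * M := by
      refine hC N (fun s => I (s : ℕ) x) (fun s => ?_) M hM0 (fun s => hle _)
      have := DFunLike.congr_fun (hproj (s : ℕ)) x
      simpa using this
    have hdiff : x - (∑ s : Fin N, I (s : ℕ) x) ∈ X₀ := by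
      rw [hX₀]
      intro t
      rw [map_sub, map_sum]
      by_cases ht : t < N
      · have heach : ∀ s : Fin N, I t (I (s : ℕ) x) =
            if (s : ℕ) = t then I t x else 0 := by
          intro s
          by_cases hst : (s : ℕ) = t
          · have hp := DFunLike.congr_fun (hproj t) x
            simp only [ContinuousLinearMap.comp_apply] at hp
            rw [hst, if_pos rfl, hp]
          · have := DFunLike.congr_fun (hann t s (Ne.symm hst)) x
            simp only [ContinuousLinearMap.comp_apply,
              ContinuousLinearMap.zero_apply] at this
            simp [this, hst]
        have hsum_eq : ∑ s : Fin N, I t (I (s : ℕ) x) = I t x := by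
          rw [Finset.sum_congr rfl (fun s _ => heach s)]
          rw [Finset.sum_eq_single (⟨t, ht⟩ : Fin N)]
          · simp
          · intro b _ hb
            rw [if_neg (by simpa [Fin.ext_iff] using hb)]
          · intro h; exact absurd (Finset.mem_univ _) h
        rw [hsum_eq, sub_self]
      · have htF : t ∉ F := fun h => ht (hNlt t h)
        have hall : ∀ s : Fin N, I t (I (s : ℕ) x) = 0 := by
          intro s
          have hst : t ≠ (s : ℕ) := by
            intro h; exact ht (h ▸ s.isLt)
          have := DFunLike.congr_fun (hann t s hst) x
          simpa using this
        simp [hF t htF, hall]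
    calc Metric.infDist x X₀
        = Metric.infDist ((∑ s : Fin N, I (s : ℕ) x)
            + (x - ∑ s : Fin N, I (s : ℕ) x)) X₀ := by congr 1; abel
      _ = Metric.infDist (∑ s : Fin N, I (s : ℕ) x) X₀ := htrans _ _ hdiff
      _ ≤ C * M := hsum
  -- continuity of the sup
  have hFlip : ∀ x y : X, (⨆ s, ‖I s x‖) ≤ (⨆ s, ‖I s y‖) + A * ‖x - y‖ := by
    intro x y
    apply ciSup_le
    intro s
    calc ‖I s x‖ = ‖I s y + I s (x - y)‖ := by
          rw [← map_add, add_sub_cancel]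
      _ ≤ ‖I s y‖ + ‖I s (x - y)‖ := norm_add_le _ _
      _ ≤ (⨆ t, ‖I t y‖) + A * ‖x - y‖ :=
          add_le_add (le_ciSup (hbdd y) s) (hbd _ s)
  have hcont : Continuous fun x : X => ⨆ s, ‖I s x‖ := by
    refine (LipschitzWith.of_dist_le_mul (K := ⟨A, hA0⟩) ?_).continuous
    intro x y
    rw [Real.dist_eq, abs_sub_le_iff, dist_eq_norm]
    have h1 := hFlip x y
    have h2 := hFlip y x
    rw [norm_sub_rev] at h2
    change _ - _ ≤ A * ‖x - y‖ ∧ _ - _ ≤ A * ‖x - y‖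
    constructor <;> linarith
  -- part 3 on Z by closure
  have part3 : ∀ x ∈ Z, Metric.infDist x X₀ ≤ C * ⨆ s, ‖I s x‖ := by
    intro x hx
    rw [hZ] at hx
    have hclosed : IsClosed {x : X | Metric.infDist x X₀ ≤ C * ⨆ s, ‖I s x‖} :=
      isClosed_le (Metric.continuous_infDist_pt X₀) (continuous_const.mul hcont)
    exact closure_minimal (fun y hy => hfin y (hsupp y hy)) hclosed hx
  -- part 1
  have part1 : ∀ x ∈ Z, Tendsto (fun s => ‖I s x‖) atTop (nhds 0) := by
    intro x hx
    rw [hZ] at hx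
    rw [Metric.tendsto_atTop]
    intro ε hε
    have hA1 : 0 < A + 1 := by linarith
    have hε' : 0 < ε / (A + 1) := div_pos hε hA1
    obtain ⟨y, hyD, hy⟩ := Metric.mem_closure_iff.1 hx (ε / (A + 1)) hε'
    obtain ⟨F, hF⟩ := hsupp y hyD
    refine ⟨F.sup id + 1, fun n hn => ?_⟩
    have hnF : n ∉ F := by
      intro h
      have := Finset.le_sup (f := id) h
      simp only [id] at this
      omega
    have heq : I n x = I n (x - y) := by simp [map_sub, hF n hnF]
    rw [Real.dist_eq, sub_zero, abs_of_nonneg (norm_nonneg _), heq]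
    calc ‖I n (x - y)‖ ≤ A * ‖x - y‖ := hbd _ n
      _ ≤ (A + 1) * ‖x - y‖ := by nlinarith [norm_nonneg (x - y)]
      _ < (A + 1) * (ε / (A + 1)) := by
          rw [← dist_eq_norm]
          exact (mul_lt_mul_iff_right₀ hA1).2 hy
      _ = ε := by field_simp
  intro x hx
  exact ⟨part1 x hx, part2 x, part3 x hx⟩
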